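/- Let $H$ be an abelian group, $n \ge 1$, and $\omega_0,\dots,\omega_n : H \to \mathbb{R}$ group homomorphisms. Then a function $a : H \to K$ satisfies the Novikov finiteness condition for every convex combination $t_0\omega_0 + \cdots + t_n\omega_n$ (with $t_i \ge 0$, $\sum t_i = 1$) if and only if it satisfies the finiteness condition for each $\omega_i$, $i = 0,\dots,n$. -/

import Mathlib

/-- the Novikov finiteness condition holds for every convex
combination `t₀ω₀ + ⋯ + tₙωₙ` iff it holds for each `ωᵢ`. -/
theorem stmt2 (H K : Type*) [AddCommGroup H] [Field K] (n : ℕ) (hn : 1 ≤ n)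
    (ω : Fin (n+1) → (H →+ ℝ)) (a : H → K) :
    (∀ t : Fin (n+1) → ℝ, (∀ i, 0 ≤ t i) → (∑ i, t i) = 1 →
      ∀ C : ℝ, {A : H | a A ≠ 0 ∧ (∑ i, t i * ω i A) ≤ C}.Finite)
    ↔ (∀ i, ∀ C : ℝ, {A : H | a A ≠ 0 ∧ ω i A ≤ C}.Finite) := by
  constructor
  · intro h i C
    have := h (fun j => if j = i then 1 else 0)
      (fun j => by split <;> norm_num)
      (by simp) C
    convert this using 3 with A
    simp [ite_mul]
  · intro h t ht ht1 C
    apply Set.Finite.subset (Set.finite_iUnion (fun i : Fin (n+1) => h i C))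
    intro A hA
    obtain ⟨ha, hsum⟩ := hA
    simp only [Set.mem_iUnion]
    by_contra hc
    push_neg at hc
    have hlt : ∀ i, C < ω i A := by
      intro i
      have := hc i
      simp only [Set.mem_setOf_eq, not_and, not_le] at this
      exact this ha
    obtain ⟨i, hi⟩ : ∃ i, 0 < t i := by
      by_contra hno
      push_neg at hno
      have : (∑ i, t i) ≤ 0 := Finset.sum_nonpos (fun i _ => hno i)
      linarith [ht1]
    have : C < ∑ j, t j * ω j A := by
      calc C = ∑ j, t j * C := by rw [← Finset.sum_mul, ht1, one_mul]
      _ < ∑ j, t j * ω j A := by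
        apply Finset.sum_lt_sum
        · intro j _
          exact mul_le_mul_of_nonneg_left (hlt j).le (ht j)
        · exact ⟨i, Finset.mem_univ i, mul_lt_mul_of_pos_left (hlt i) hi⟩
    linarith
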